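/- For GL(n): let 0 < u < 1/n be rational, a, b units in the ring of integers of Q̄_p, and define a character χ of X = ℤⁿ (extended to A ∩ H over Q̄_p with χ(q) = q, 0 < v_p(q)) by χ(E_i) = a q^{u+i-1} for 1 ≤ i ≤ n−1 and χ(E_n) = b q^{(n-1)(1-u)}. Then χ is integral, i.e. χ(E_I) ∈ Z̄_p for every subset I ⊆ {1,…,n} and χ(E_{{1,…,n}}) = a^{n-1} b ∈ Z̄_p^×; moreover the reduction mod p of χ is the supersingular character killing E_I for all proper nonempty I and taking value r_p(a^{n-1}b) on E_{{1,…,n}}. -/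

import Mathlib

open Finset in
lemma aux_sum_lb (J : Finset ℕ) : (J.card : ℚ) * ((J.card : ℚ) - 1) / 2 ≤ ∑ j ∈ J, (j : ℚ) := by
  induction J using Finset.strongInduction with
  | _ J ih =>
    rcases J.eq_empty_or_nonempty with rfl | hJ
    · simp
    · have hm := J.max'_mem hJ
      have hcard : J.card ≤ J.max' hJ + 1 := by
        have hsub : J ⊆ Finset.range (J.max' hJ + 1) := fun x hx =>
          Finset.mem_range.2 (Nat.lt_succ_of_le (J.le_max' x hx))
        simpa using Finset.card_le_card hsub
      have hIH := ih (J.erase (J.max' hJ)) (Finset.erase_ssubset hm)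
      rw [← Finset.add_sum_erase _ _ hm]
      have hce : (J.erase (J.max' hJ)).card = J.card - 1 := Finset.card_erase_of_mem hm
      have hc1 : 1 ≤ J.card := Finset.card_pos.2 hJ
      rw [hce] at hIH
      have hcast : ((J.card - 1 : ℕ) : ℚ) = (J.card : ℚ) - 1 := by
        push_cast [hc1]; ring
      rw [hcast] at hIH
      have hmax : (J.card : ℚ) - 1 ≤ (J.max' hJ : ℚ) := by
        have : J.card - 1 ≤ J.max' hJ := by omega
        have h2 : ((J.card - 1 : ℕ):ℚ) ≤ (J.max' hJ : ℚ) := by exact_mod_cast this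
        rw [hcast] at h2; exact h2
      nlinarith [hIH, hmax]

/-- Sum of distinct values of a finset of `Fin n` is at least `c(c-1)/2`. -/
lemma aux_fin_sum_lb {n : ℕ} (I : Finset (Fin n)) :
    (I.card : ℚ) * ((I.card : ℚ) - 1) / 2 ≤ ∑ i ∈ I, ((i : ℕ) : ℚ) := by
  have hinj : Function.Injective (Fin.val : Fin n → ℕ) := Fin.val_injective
  have h1 : (I.image Fin.val).card = I.card :=
    Finset.card_image_of_injective _ hinj
  have h2 : ∑ j ∈ I.image Fin.val, (j : ℚ) = ∑ i ∈ I, ((i : ℕ) : ℚ) :=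
    Finset.sum_image (fun x _ y _ h => hinj h)
  have := aux_sum_lb (I.image Fin.val)
  rw [h1, h2] at this
  exact this


/-- For `GL(n)`: let `0 < u < 1/n` be rational, `a, b` units of `Z̄_p`, and define
a character `χ` of `X = ℤⁿ` (extended to `A ∩ H` over `Q̄_p`, with `χ(q) = q` of
positive valuation) by `χ(E_i) = a q^{u+i-1}` for `1 ≤ i ≤ n−1` and
`χ(E_n) = b q^{(n-1)(1-u)}`, so that `χ(E_I) = q^{t(1-t)/2} Π_{i∈I} χ(E_i)` for
`|I| = t`.  Then `χ` is integral: `χ(E_I) ∈ Z̄_p` (valuation `≥ 0`) for every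
`I ⊆ {1,…,n}`, and `χ(E_{{1,…,n}}) = a^{n-1} b` is a unit of `Z̄_p`
(valuation `0`); moreover the reduction mod `p` of `χ` is the supersingular
character: `χ(E_I)` has valuation `> 0` (reduction `0`) for every proper
nonempty `I`, while `χ(E_{{1,…,n}})` reduces to `r_p(a^{n-1}b)`.

The `p`-adic field `Q̄_p` is modelled by a field `K` equipped with a (rank one,
`ℚ`-valued) valuation `v` on `Kˣ`, and the fixed compatible system of rational
powers of `q` by a homomorphism `qp : ℚ → Kˣ` with `q = qp 1`. -/
theorem stmt_19 (n : ℕ) (hn : 0 < n) (K : Type*) [Field K]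
    (v : Kˣ → ℚ) (hv : ∀ x y : Kˣ, v (x * y) = v x + v y)
    (qp : ℚ → Kˣ) (hqp : ∀ e e' : ℚ, qp (e + e') = qp e * qp e')
    (hqval : ∀ e : ℚ, v (qp e) = e * v (qp 1)) (hqpos : 0 < v (qp 1))
    (a b : Kˣ) (hva : v a = 0) (hvb : v b = 0)
    (u : ℚ) (hu0 : 0 < u) (hu1 : u < 1 / n)
    (χE : Finset (Fin n) → Kˣ)
    (hχE : ∀ I : Finset (Fin n),
      χE I = qp ((I.card : ℚ) * (1 - (I.card : ℚ)) / 2) *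
        ∏ i ∈ I, (if (i : ℕ) = n - 1 then b * qp ((n - 1 : ℚ) * (1 - u))
                  else a * qp (u + (i : ℕ))) ) :
    (∀ I : Finset (Fin n), 0 ≤ v (χE I)) ∧
    (χE Finset.univ = a ^ (n - 1) * b ∧ v (a ^ (n - 1) * b) = 0) ∧
    (∀ I : Finset (Fin n), I.Nonempty → I ≠ Finset.univ → 0 < v (χE I)) := by
  classical
  set V := v (qp 1) with hV
  -- basic facts
  have hv1 : v 1 = 0 := by have := hv 1 1; simp at this; linarith
  have hqp0 : qp 0 = 1 := by
    have h := hqp 0 0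
    simp only [add_zero] at h
    have : qp 0 * (1 : Kˣ) = qp 0 * qp 0 := by rw [mul_one]; exact h
    exact (mul_left_cancel this).symm
  have hvprod : ∀ (I : Finset (Fin n)) (f : Fin n → Kˣ),
      v (∏ i ∈ I, f i) = ∑ i ∈ I, v (f i) := by
    intro I f
    induction I using Finset.cons_induction with
    | empty => simpa using hv1
    | cons i s hi ih => rw [Finset.prod_cons, hv, ih, Finset.sum_cons]
  have hqpsum : ∀ (I : Finset (Fin n)) (f : Fin n → ℚ),
      qp (∑ i ∈ I, f i) = ∏ i ∈ I, qp (f i) := by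
    intro I f
    induction I using Finset.cons_induction with
    | empty => simpa using hqp0
    | cons i s hi ih => rw [Finset.prod_cons, Finset.sum_cons, hqp, ih]
  have hvpow : ∀ (k : ℕ), v (a ^ k) = 0 := by
    intro k
    induction k with
    | zero => simpa using hv1
    | succ k ih => rw [pow_succ, hv, ih, hva, add_zero]
  have hvab : v (a ^ (n - 1) * b) = 0 := by rw [hv, hvpow, hvb, add_zero]
  -- the distinguished element
  have hn1 : n - 1 < n := by omega
  set en : Fin n := ⟨n - 1, hn1⟩ with hen
  have heniff : ∀ i : Fin n, (i : ℕ) = n - 1 ↔ i = en := by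
    intro i; constructor
    · intro h; exact Fin.ext h
    · intro h; rw [h]
  -- weight function
  set W : Fin n → ℚ := fun i => if (i : ℕ) = n - 1 then ((n : ℚ) - 1) * (1 - u) else u + (i : ℕ)
    with hW
  have key : ∀ I : Finset (Fin n),
      v (χE I) = ((I.card : ℚ) * (1 - (I.card : ℚ)) / 2 + ∑ i ∈ I, W i) * V := by
    intro I
    rw [hχE, hv, hqval, hvprod]
    have : ∀ i ∈ I, v (if (i : ℕ) = n - 1 then b * qp ((n - 1 : ℚ) * (1 - u))
        else a * qp (u + (i : ℕ))) = W i * V := by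
      intro i _
      by_cases h : (i : ℕ) = n - 1
      · have hWi : W i = ((n : ℚ) - 1) * (1 - u) := by simp only [hW, if_pos h]
        rw [if_pos h, hWi, hv, hvb, hqval]
        ring
      · have hWi : W i = u + ((i : ℕ) : ℚ) := by simp only [hW, if_neg h]
        rw [if_neg h, hWi, hv, hva, hqval]
        ring
    rw [Finset.sum_congr rfl this, ← Finset.sum_mul]
    ring
  have hcard_le : ∀ I : Finset (Fin n), I.card ≤ n := by
    intro I
    have := Finset.card_le_univ I
    simpa using this
  have hu1' : u < 1 := by
    have h1 : (1 : ℚ) / n ≤ 1 := by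
      rw [div_le_one (by exact_mod_cast hn)]
      exact_mod_cast hn
    linarith
  -- main lower bound on the exponent
  have main : ∀ I : Finset (Fin n),
      (if en ∈ I then ((n : ℚ) - I.card) * (1 - u) else (I.card : ℚ) * u) ≤
        (I.card : ℚ) * (1 - (I.card : ℚ)) / 2 + ∑ i ∈ I, W i := by
    intro I
    by_cases hmem : en ∈ I
    · rw [if_pos hmem]
      rw [← Finset.add_sum_erase _ _ hmem]
      have hWen : W en = ((n : ℚ) - 1) * (1 - u) := by
        have h : ((en : Fin n) : ℕ) = n - 1 := rfl
        simp only [hW, if_pos h]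
      have hrest : ∀ i ∈ I.erase en, W i = u + (i : ℕ) := by
        intro i hi
        have : i ≠ en := Finset.ne_of_mem_erase hi
        have h2 : (i : ℕ) ≠ n - 1 := fun h => this (Fin.ext h)
        simp only [hW, if_neg h2]
      rw [hWen, Finset.sum_congr rfl hrest, Finset.sum_add_distrib, Finset.sum_const,
        Finset.card_erase_of_mem hmem, nsmul_eq_mul]
      have hc1 : 1 ≤ I.card := Finset.card_pos.2 ⟨en, hmem⟩
      have hcast : ((I.card - 1 : ℕ) : ℚ) = (I.card : ℚ) - 1 := by push_cast [hc1]; ring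
      have hlb := aux_fin_sum_lb (I.erase en)
      rw [Finset.card_erase_of_mem hmem, hcast] at hlb
      rw [hcast]
      have hc1q : (1 : ℚ) ≤ I.card := by exact_mod_cast hc1
      have hcle : (I.card : ℚ) ≤ n := by exact_mod_cast hcard_le I
      nlinarith [hlb, hc1q, hcle]
    · rw [if_neg hmem]
      have hrest : ∀ i ∈ I, W i = u + (i : ℕ) := by
        intro i hi
        have : i ≠ en := fun h => hmem (h ▸ hi)
        have h2 : (i : ℕ) ≠ n - 1 := fun h => this (Fin.ext h)
        simp only [hW, if_neg h2]
      rw [Finset.sum_congr rfl hrest, Finset.sum_add_distrib, Finset.sum_const,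
        nsmul_eq_mul]
      have hlb := aux_fin_sum_lb I
      nlinarith [hlb]
  refine ⟨?_, ⟨?_, hvab⟩, ?_⟩
  · -- integrality
    intro I
    rw [key]
    apply mul_nonneg _ (le_of_lt hqpos)
    refine le_trans ?_ (main I)
    by_cases hmem : en ∈ I
    · rw [if_pos hmem]
      have hcle : (I.card : ℚ) ≤ n := by exact_mod_cast hcard_le I
      nlinarith
    · rw [if_neg hmem]
      exact mul_nonneg (Nat.cast_nonneg _) hu0.le
  · -- value at univ
    rw [hχE]
    have hmem : en ∈ (Finset.univ : Finset (Fin n)) := Finset.mem_univ en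
    rw [← Finset.mul_prod_erase _ _ hmem]
    have hiten : (if ((en : Fin n) : ℕ) = n - 1 then b * qp ((n - 1 : ℚ) * (1 - u))
        else a * qp (u + ((en : Fin n) : ℕ))) = b * qp ((n - 1 : ℚ) * (1 - u)) := by
      rw [if_pos rfl]
    rw [hiten]
    have hrest : ∏ i ∈ Finset.univ.erase en,
        (if (i : ℕ) = n - 1 then b * qp ((n - 1 : ℚ) * (1 - u)) else a * qp (u + (i : ℕ))) =
        ∏ i ∈ Finset.univ.erase en, (a * qp (u + (i : ℕ))) := by
      apply Finset.prod_congr rfl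
      intro i hi
      have hne : i ≠ en := Finset.ne_of_mem_erase hi
      have h2 : (i : ℕ) ≠ n - 1 := fun h => hne (Fin.ext h)
      rw [if_neg h2]
    rw [hrest, Finset.prod_mul_distrib, Finset.prod_const, ← hqpsum]
    have hcarde : (Finset.univ.erase en).card = n - 1 := by
      rw [Finset.card_erase_of_mem hmem, Finset.card_univ, Fintype.card_fin]
    rw [hcarde]
    -- compute the sum of exponents
    have hsumval : ∑ i ∈ Finset.univ.erase en, ((i : ℕ) : ℚ) = (n : ℚ) * ((n : ℚ) - 1) / 2 - ((n : ℚ) - 1) := by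
      have htot : ∑ i : Fin n, ((i : ℕ) : ℚ) = (n : ℚ) * ((n : ℚ) - 1) / 2 := by
        have h1 : ∑ i : Fin n, ((i : ℕ) : ℚ) = ∑ i ∈ Finset.range n, (i : ℚ) :=
          Fin.sum_univ_eq_sum_range _ n
        have h2 : (∑ i ∈ Finset.range n, i) * 2 = n * (n - 1) := Finset.sum_range_id_mul_two n
        have h3 : ((∑ i ∈ Finset.range n, i : ℕ) : ℚ) * 2 = (((n * (n - 1) : ℕ)) : ℚ) := by
          exact_mod_cast congrArg (Nat.cast : ℕ → ℚ) h2
        have h4 : (((n * (n - 1) : ℕ)) : ℚ) = (n : ℚ) * ((n : ℚ) - 1) := by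
          rw [Nat.cast_mul, Nat.cast_sub (by omega : 1 ≤ n)]
          push_cast; ring
        rw [h4] at h3
        have h5 : ((∑ i ∈ Finset.range n, i : ℕ) : ℚ) = ∑ i ∈ Finset.range n, (i : ℚ) := by
          push_cast; rfl
        rw [h5] at h3
        rw [h1]
        linarith
      have henval : (((en : Fin n) : ℕ) : ℚ) = (n : ℚ) - 1 := by
        have h : ((en : Fin n) : ℕ) = n - 1 := rfl
        rw [h, Nat.cast_sub (by omega : 1 ≤ n)]
        push_cast; ring
      have hsplit : (((en : Fin n) : ℕ) : ℚ) + ∑ i ∈ Finset.univ.erase en, ((i : ℕ) : ℚ) =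
          ∑ i : Fin n, ((i : ℕ) : ℚ) :=
        Finset.add_sum_erase Finset.univ (fun i : Fin n => ((i : ℕ) : ℚ)) hmem
      rw [henval, htot] at hsplit
      linarith
    have hsumexp : ∑ i ∈ Finset.univ.erase en, (u + ((i : ℕ) : ℚ)) =
        ((n : ℚ) - 1) * u + ((n : ℚ) * ((n : ℚ) - 1) / 2 - ((n : ℚ) - 1)) := by
      rw [Finset.sum_add_distrib, Finset.sum_const, hcarde, hsumval, nsmul_eq_mul]
      have : ((n - 1 : ℕ) : ℚ) = (n : ℚ) - 1 := by
        rw [Nat.cast_sub (by omega : 1 ≤ n)]; push_cast; ring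
      rw [this]
    rw [hsumexp]
    have hcardu : ((Finset.univ : Finset (Fin n)).card : ℚ) = (n : ℚ) := by
      rw [Finset.card_univ, Fintype.card_fin]
    rw [hcardu]
    -- now combine the qp factors
    calc qp ((n : ℚ) * (1 - (n : ℚ)) / 2) *
        (b * qp ((n - 1 : ℚ) * (1 - u)) *
          (a ^ (n - 1) * qp (((n : ℚ) - 1) * u + ((n : ℚ) * ((n : ℚ) - 1) / 2 - ((n : ℚ) - 1))))) =
        a ^ (n - 1) * b * (qp ((n : ℚ) * (1 - (n : ℚ)) / 2) * qp ((n - 1 : ℚ) * (1 - u)) *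
          qp (((n : ℚ) - 1) * u + ((n : ℚ) * ((n : ℚ) - 1) / 2 - ((n : ℚ) - 1)))) := by
          ac_rfl
      _ = a ^ (n - 1) * b * qp ((n : ℚ) * (1 - (n : ℚ)) / 2 + (n - 1 : ℚ) * (1 - u) +
          (((n : ℚ) - 1) * u + ((n : ℚ) * ((n : ℚ) - 1) / 2 - ((n : ℚ) - 1)))) := by
          rw [← hqp, ← hqp]
      _ = a ^ (n - 1) * b := by
          rw [show (n : ℚ) * (1 - (n : ℚ)) / 2 + (n - 1 : ℚ) * (1 - u) +
            (((n : ℚ) - 1) * u + ((n : ℚ) * ((n : ℚ) - 1) / 2 - ((n : ℚ) - 1))) = (0 : ℚ) by ring,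
            hqp0, mul_one]
  · -- supersingularity
    intro I hne hproper
    rw [key]
    apply mul_pos _ hqpos
    refine lt_of_lt_of_le ?_ (main I)
    have hc1 : (1 : ℚ) ≤ I.card := by exact_mod_cast Finset.card_pos.2 hne
    by_cases hmem : en ∈ I
    · rw [if_pos hmem]
      have hclt : I.card < n := by
        have hss : I ⊂ Finset.univ := Finset.ssubset_univ_iff.2 hproper
        have := Finset.card_lt_card hss
        simpa using this
      have hclt' : (I.card : ℚ) < n := by exact_mod_cast hclt
      nlinarith
    · rw [if_neg hmem]
      nlinarith
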